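/- Σ_{k=0}^{∞} h_k / k! = e · Ein(1), where h_k is the k-th harmonic number (with h₀ = 0) and Ein(1) = Σ_{n=1}^{∞} (−1)^{n−1}/(n · n!). -/
import Mathlib


/-- The `k`-th harmonic number as a real number (`h 0 = 0`). -/
noncomputable def h (k : ℕ) : ℝ := ∑ j ∈ Finset.range k, (1 : ℝ) / (j + 1)

/-- The entire exponential integral `Ein(z) = ∑_{n≥1} (-1)^{n-1} zⁿ/(n·n!)`. -/
noncomputable def Ein (z : ℝ) : ℝ :=
  ∑' n : ℕ, (-1) ^ n * z ^ (n + 1) / ((n + 1) * (n + 1).factorial)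

lemma alt_sum_choose_succ (k : ℕ) :
    ∑ j ∈ Finset.range (k + 1), (-1 : ℝ) ^ j * ((k + 1).choose (j + 1)) = 1 := by
  have h0 : (∑ i ∈ Finset.range (k + 2), (-1 : ℤ) ^ i * ((k + 1).choose i)) = 0 := by
    simpa using Int.alternating_sum_range_choose_of_ne (Nat.succ_ne_zero k)
  have h1 : (∑ i ∈ Finset.range (k + 2), (-1 : ℝ) ^ i * ((k + 1).choose i)) = 0 := by
    have := congrArg (fun z : ℤ => (z : ℝ)) h0
    push_cast at this
    simpa using this
  rw [Finset.sum_range_succ'] at h1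
  simp only [pow_succ, pow_zero, one_mul, Nat.choose_zero_right, Nat.cast_one] at h1
  have : (∑ j ∈ Finset.range (k + 1), (-1 : ℝ) ^ j * (-1) * ((k + 1).choose (j + 1))) + 1 = 0 := by
    simpa [mul_assoc, mul_comm, mul_left_comm] using h1
  have h2 : (∑ j ∈ Finset.range (k + 1), (-1 : ℝ) ^ j * ((k + 1).choose (j + 1))) = 1 := by
    have := this
    rw [Finset.sum_congr rfl (fun j _ => by ring :
      ∀ j ∈ Finset.range (k + 1), (-1 : ℝ) ^ j * (-1) * ((k + 1).choose (j + 1))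
        = -((-1 : ℝ) ^ j * ((k + 1).choose (j + 1))))] at this
    rw [Finset.sum_neg_distrib] at this
    linarith
  exact h2

lemma aux1 (k : ℕ) :
    ∑ j ∈ Finset.range (k + 1), (-1 : ℝ) ^ j * (k.choose j) / (j + 1) = 1 / (k + 1) := by
  have key : ∀ j ∈ Finset.range (k + 1),
      (-1 : ℝ) ^ j * (k.choose j) / (j + 1)
        = ((-1 : ℝ) ^ j * ((k + 1).choose (j + 1))) * (1 / (k + 1)) := by
    intro j _
    have hnat : (k + 1) * k.choose j = (k + 1).choose (j + 1) * (j + 1) :=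
      Nat.add_one_mul_choose_eq k j
    have hre : ((k : ℝ) + 1) * (k.choose j) = ((k + 1).choose (j + 1) : ℝ) * (j + 1) := by
      exact_mod_cast congrArg (fun n : ℕ => (n : ℝ)) hnat
    have hj : ((j : ℝ) + 1) ≠ 0 := by positivity
    have hk : ((k : ℝ) + 1) ≠ 0 := by positivity
    have hdiv : ((k.choose j : ℝ)) / (j + 1) = (((k + 1).choose (j + 1) : ℝ)) / (k + 1) := by
      rw [div_eq_div_iff hj hk]
      push_cast at hre ⊢
      linear_combination hre
    rw [mul_div_assoc, hdiv]
    ring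
  rw [Finset.sum_congr rfl key, ← Finset.sum_mul, alt_sum_choose_succ k, one_mul]

lemma key_identity (k : ℕ) :
    ∑ j ∈ Finset.range k, (-1 : ℝ) ^ j * (k.choose (j + 1)) / (j + 1) = h k := by
  induction k with
  | zero => simp [h]
  | succ k ih =>
    have pascal : ∀ j ∈ Finset.range (k + 1),
        (-1 : ℝ) ^ j * ((k + 1).choose (j + 1)) / (j + 1)
          = (-1 : ℝ) ^ j * (k.choose j) / (j + 1)
            + (-1 : ℝ) ^ j * (k.choose (j + 1)) / (j + 1) := by
      intro j _
      have : ((k + 1).choose (j + 1) : ℝ) = (k.choose j : ℝ) + (k.choose (j + 1) : ℝ) := by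
        exact_mod_cast congrArg (fun n : ℕ => (n : ℝ)) (Nat.choose_succ_succ k j)
      rw [this]; ring
    rw [Finset.sum_congr rfl pascal, Finset.sum_add_distrib, aux1 k]
    have htail : ∑ j ∈ Finset.range (k + 1), (-1 : ℝ) ^ j * (k.choose (j + 1)) / (j + 1)
        = ∑ j ∈ Finset.range k, (-1 : ℝ) ^ j * (k.choose (j + 1)) / (j + 1) := by
      rw [Finset.sum_range_succ, Nat.choose_succ_self]
      simp
    rw [htail, ih]
    simp [h, Finset.sum_range_succ]
    ring

lemma coeff_eq (n : ℕ) :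
    ∑ j ∈ Finset.range (n + 1),
      ((-1 : ℝ) ^ j / ((j + 1) * (j + 1).factorial)) * ((1 : ℝ) / (n - j).factorial)
        = h (n + 1) / (n + 1).factorial := by
  have key : ∀ j ∈ Finset.range (n + 1),
      ((-1 : ℝ) ^ j / ((j + 1) * (j + 1).factorial)) * ((1 : ℝ) / (n - j).factorial)
        = ((-1 : ℝ) ^ j * ((n + 1).choose (j + 1)) / (j + 1)) * (1 / (n + 1).factorial) := by
    intro j hj
    have hjn : j + 1 ≤ n + 1 := Nat.succ_le_succ (Nat.lt_succ_iff.mp (Finset.mem_range.mp hj))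
    have hfact : (n + 1).choose (j + 1) * (j + 1).factorial * (n - j).factorial
        = (n + 1).factorial := by
      have := Nat.choose_mul_factorial_mul_factorial hjn
      simpa [Nat.succ_sub_succ] using this
    have hre : ((n + 1).choose (j + 1) : ℝ) * ((j + 1).factorial : ℝ) * ((n - j).factorial : ℝ)
        = ((n + 1).factorial : ℝ) := by exact_mod_cast congrArg (fun m : ℕ => (m : ℝ)) hfact
    have h1 : ((j + 1).factorial : ℝ) ≠ 0 := by positivity
    have h2 : ((n - j).factorial : ℝ) ≠ 0 := by positivity
    have h3 : ((n + 1).factorial : ℝ) ≠ 0 := by positivity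
    have h4 : ((j : ℝ) + 1) ≠ 0 := by positivity
    have h5 : ((j : ℝ) + 1) * ((j + 1).factorial : ℝ) ≠ 0 := by positivity
    have h6 : ((j : ℝ) + 1) * ((n + 1).factorial : ℝ) ≠ 0 := by positivity
    have hdiv : (1 : ℝ) / (((j : ℝ) + 1) * ((j + 1).factorial : ℝ)) * ((1 : ℝ) / ((n - j).factorial : ℝ))
        = (((n + 1).choose (j + 1) : ℝ)) / (((j : ℝ) + 1) * ((n + 1).factorial : ℝ)) := by
      rw [div_mul_div_comm, one_mul, div_eq_div_iff (by positivity) h6]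
      push_cast at hre ⊢
      linear_combination (-((j : ℝ) + 1)) * hre
    calc ((-1 : ℝ) ^ j / (((j : ℝ) + 1) * ((j + 1).factorial : ℝ))) * ((1 : ℝ) / ((n - j).factorial : ℝ))
        = (-1 : ℝ) ^ j * ((1 / (((j : ℝ) + 1) * ((j + 1).factorial : ℝ))) * (1 / ((n - j).factorial : ℝ))) := by
          ring
      _ = (-1 : ℝ) ^ j * (((n + 1).choose (j + 1) : ℝ) / (((j : ℝ) + 1) * ((n + 1).factorial : ℝ))) := by
          rw [hdiv]
      _ = ((-1 : ℝ) ^ j * ((n + 1).choose (j + 1) : ℝ) / ((j : ℝ) + 1)) * (1 / ((n + 1).factorial : ℝ)) := by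
          rw [mul_one_div, div_div, ← mul_div_assoc]
  rw [Finset.sum_congr rfl key, ← Finset.sum_mul, key_identity (n + 1)]
  ring

theorem stmt12 :
    ∑' k : ℕ, h k / k.factorial = Real.exp 1 * Ein 1 := by
  -- summability facts
  have hfnorm : Summable (fun n : ℕ => ‖(1 : ℝ) / n.factorial‖) := by
    have := Real.summable_pow_div_factorial 1
    simpa [norm_div, abs_of_nonneg] using this.abs
  have hgnorm : Summable (fun n : ℕ => ‖(-1 : ℝ) ^ n / ((n + 1) * (n + 1).factorial)‖) := by
    have hbig : Summable (fun n : ℕ => (1 : ℝ) / n.factorial) := by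
      simpa using Real.summable_pow_div_factorial 1
    refine Summable.of_nonneg_of_le (fun n => norm_nonneg _) (fun n => ?_) hbig
    have h1 : (0 : ℝ) < (n.factorial : ℝ) := by positivity
    have h2 : (0 : ℝ) < ((n : ℝ) + 1) * ((n + 1).factorial : ℝ) := by positivity
    have hle : (n.factorial : ℝ) ≤ ((n : ℝ) + 1) * ((n + 1).factorial : ℝ) := by
      have hf : (n.factorial : ℝ) ≤ ((n + 1).factorial : ℝ) := by
        exact_mod_cast Nat.factorial_le (Nat.le_succ n)
      nlinarith [Nat.cast_nonneg (α := ℝ) n, hf]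
    rw [norm_div, norm_pow, norm_neg, norm_one, one_pow]
    rw [Real.norm_eq_abs, abs_of_pos (by exact h2)]
    push_cast at hle ⊢
    exact one_div_le_one_div_of_le h1 hle
  -- Ein 1 as a tsum
  have hEin : Ein 1 = ∑' n : ℕ, (-1 : ℝ) ^ n / ((n + 1) * (n + 1).factorial) := by
    unfold Ein
    congr 1; funext n; rw [one_pow, mul_one]
  -- exp 1 as a tsum
  have hexp : Real.exp 1 = ∑' n : ℕ, (1 : ℝ) / n.factorial := by
    rw [Real.exp_eq_exp_ℝ, NormedSpace.exp_eq_tsum_div]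
    simp
  -- Cauchy product
  have cauchy : Real.exp 1 * Ein 1
      = ∑' n : ℕ, ∑ j ∈ Finset.range (n + 1),
          ((-1 : ℝ) ^ j / ((j + 1) * (j + 1).factorial)) * ((1 : ℝ) / (n - j).factorial) := by
    rw [hEin, hexp, mul_comm]
    exact tsum_mul_tsum_eq_tsum_sum_range_of_summable_norm hgnorm hfnorm
  rw [cauchy]
  have hcoeff : ∀ n : ℕ, (∑ j ∈ Finset.range (n + 1),
      ((-1 : ℝ) ^ j / ((j + 1) * (j + 1).factorial)) * ((1 : ℝ) / (n - j).factorial))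
        = h (n + 1) / (n + 1).factorial := coeff_eq
  rw [tsum_congr hcoeff]
  -- shift index on the left
  have hsummable : Summable (fun n : ℕ => h (n + 1) / (n + 1).factorial) := by
    have := summable_norm_sum_mul_range_of_summable_norm hgnorm hfnorm
    exact (summable_congr hcoeff).mp this.of_norm
  have hsum0 : Summable (fun k : ℕ => h k / k.factorial) := by
    rw [← summable_nat_add_iff 1]
    exact hsummable
  rw [Summable.tsum_eq_zero_add hsum0]
  simp [h]
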